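/- Let X and Y be locally compact Hausdorff spaces and let T : C₀(X)⁺ → C₀(Y)⁺ be a bijection satisfying ‖T(f+g)‖ = ‖Tf + Tg‖ for all f, g ∈ C₀(X)⁺. Then there exist a homeomorphism τ : Y → X and a continuous function h : Y → (0,∞) that is bounded and bounded away from zero, such that Tf(y) = h(y)·f(τ(y)) for all f ∈ C₀(X)⁺ and all y ∈ Y. -/

import Mathlib

open scoped ZeroAtInfty

/-- The positive cone of `C₀(X, ℝ)`: continuous real-valued functions on `X`
vanishing at infinity that are nonnegative everywhere. -/
def posCone (X : Type*) [TopologicalSpace X] : Set C₀(X, ℝ) :=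
  {f | ∀ x, 0 ≤ f x}



open Filter Set Topology

set_option linter.unusedSectionVars false
set_option linter.unusedVariables false
set_option maxHeartbeats 1000000

section Toolkit

variable {Z : Type*} [TopologicalSpace Z]

lemma pc_abs_le (p : C₀(Z, ℝ)) (z : Z) : |p z| ≤ ‖p‖ := by
  have h1 : ‖p.toBCF z‖ ≤ ‖p.toBCF‖ := BoundedContinuousFunction.norm_coe_le_norm _ z
  simpa [ZeroAtInftyContinuousMap.norm_toBCF_eq_norm, Real.norm_eq_abs] using h1

lemma pc_le_norm {p : C₀(Z, ℝ)} (hp : p ∈ posCone Z) (z : Z) : p z ≤ ‖p‖ :=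
  (abs_le.mp (pc_abs_le p z)).2

lemma pc_norm_le {p : C₀(Z, ℝ)} {C : ℝ} (hC : 0 ≤ C) (h : ∀ z, |p z| ≤ C) : ‖p‖ ≤ C := by
  rw [← ZeroAtInftyContinuousMap.norm_toBCF_eq_norm]
  exact (BoundedContinuousFunction.norm_le hC).2 (by simpa [Real.norm_eq_abs] using h)

lemma pc_norm_le' {p : C₀(Z, ℝ)} {C : ℝ} (hp : p ∈ posCone Z) (hC : 0 ≤ C)
    (h : ∀ z, p z ≤ C) : ‖p‖ ≤ C :=
  pc_norm_le hC (fun z => by rw [abs_of_nonneg (hp z)]; exact h z)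

lemma pc_norm_smul (c : ℝ) (p : C₀(Z, ℝ)) : ‖c • p‖ = |c| * ‖p‖ := by
  rw [← ZeroAtInftyContinuousMap.norm_toBCF_eq_norm, ← ZeroAtInftyContinuousMap.norm_toBCF_eq_norm]
  have h : (c • p).toBCF = c • p.toBCF := rfl
  rw [h, norm_smul, Real.norm_eq_abs]

lemma pc_norm_nonneg (p : C₀(Z, ℝ)) : 0 ≤ ‖p‖ := norm_nonneg p

/-- superlevel sets of a C₀ function at positive levels are compact -/
lemma pc_superlevel_compact (p : C₀(Z, ℝ)) {δ : ℝ} (hδ : 0 < δ) :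
    IsCompact {z | δ ≤ p z} := by
  have h1 : ∀ᶠ z in cocompact Z, p z < δ := p.zero_at_infty'.eventually_lt_const hδ
  rcases mem_cocompact.mp h1 with ⟨K, hK, hKs⟩
  apply hK.of_isClosed_subset (isClosed_le continuous_const p.continuous)
  intro z hz
  by_contra hzK
  have h2 : p z < δ := hKs hzK
  have h3 : δ ≤ p z := hz
  linarith

/-- norm attainment for nonnegative C₀ functions -/
lemma pc_attain [Nonempty Z] {p : C₀(Z, ℝ)} (hp : p ∈ posCone Z) : ∃ z, p z = ‖p‖ := by
  rcases eq_or_lt_of_le (pc_norm_nonneg p) with h0 | h0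
  · inhabit Z
    exact ⟨default, le_antisymm (pc_le_norm hp _) (h0 ▸ hp default)⟩
  · -- ‖p‖ > 0
    have hK : IsCompact {z | ‖p‖ / 2 ≤ p z} := pc_superlevel_compact p (by linarith)
    have hne : {z | ‖p‖ / 2 ≤ p z}.Nonempty := by
      by_contra hcon
      rw [Set.not_nonempty_iff_eq_empty] at hcon
      have : ‖p‖ ≤ ‖p‖ / 2 := by
        apply pc_norm_le' hp (by linarith)
        intro z
        by_contra hz
        have hmem : z ∈ {z | ‖p‖ / 2 ≤ p z} := le_of_lt (lt_of_not_ge hz)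
        rw [hcon] at hmem
        exact hmem
      linarith
    obtain ⟨z₀, hz₀K, hz₀max⟩ := hK.exists_isMaxOn hne (p.continuous.continuousOn)
    refine ⟨z₀, le_antisymm (pc_le_norm hp _) ?_⟩
    apply pc_norm_le' hp (le_trans (by linarith) hz₀K)
    intro z
    by_cases hz : z ∈ {z | ‖p‖ / 2 ≤ p z}
    · exact hz₀max hz
    · have : p z < ‖p‖ / 2 := lt_of_not_ge hz
      exact le_trans this.le hz₀K

end Toolkit

section Toolkit2

variable {Z : Type*} [TopologicalSpace Z]


/-- build a C₀ function from a compactly supported continuous function -/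
noncomputable def pcOfCS (f : C(Z, ℝ)) (hf : HasCompactSupport f) : C₀(Z, ℝ) where
  toContinuousMap := f
  zero_at_infty' := by
    have hev : ∀ᶠ z in cocompact Z, f z = 0 := by
      rw [Filter.eventually_iff, mem_cocompact]
      exact ⟨tsupport ⇑f, hf, fun z hz =>
        show f z = 0 from image_eq_zero_of_notMem_tsupport hz⟩
    exact tendsto_const_nhds.congr' (by filter_upwards [hev] with z hz using hz.symm)

@[simp] lemma pcOfCS_apply (f : C(Z, ℝ)) (hf : HasCompactSupport f) (z : Z) :
    pcOfCS f hf z = f z := rfl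

lemma pcOfCS_coe (f : C(Z, ℝ)) (hf : HasCompactSupport f) : ⇑(pcOfCS f hf) = ⇑f := rfl

/-- bump functions: 1 near a point, supported in a prescribed open set -/
lemma pc_bump [T2Space Z] [LocallyCompactSpace Z] {z₀ : Z} {W : Set Z}
    (hW : IsOpen W) (hz : z₀ ∈ W) :
    ∃ v : C₀(Z, ℝ), v ∈ posCone Z ∧ (∀ z, v z ≤ 1) ∧ tsupport ⇑v ⊆ W ∧
      IsCompact (tsupport ⇑v) ∧
      ∃ V : Set Z, IsOpen V ∧ z₀ ∈ V ∧ ∀ z ∈ V, v z = 1 := by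
  obtain ⟨K, hKcomp, hKint, hKW⟩ := exists_compact_subset hW hz
  obtain ⟨K₂, hK₂comp, hK₂int, hK₂K⟩ := exists_compact_subset isOpen_interior hKint
  obtain ⟨f, hf1, hf0, hfcs, hf01⟩ := exists_continuous_one_zero_of_isCompact hK₂comp
    (isClosed_compl_iff.mpr isOpen_interior)
    (Set.disjoint_left.mpr (fun z hzK₂ hzc => hzc (hK₂K hzK₂)))
  refine ⟨pcOfCS f hfcs, fun z => (hf01 z).1, fun z => (hf01 z).2, ?_,
    by rw [pcOfCS_coe]; exact hfcs, interior K₂,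
    isOpen_interior, hK₂int, fun z hzV => hf1 (interior_subset hzV)⟩

  have hsupp : Function.support ⇑f ⊆ interior K := by
    intro z hz
    by_contra hzK
    exact hz (hf0 hzK)
  calc tsupport (⇑(pcOfCS f hfcs)) = tsupport ⇑f := by rw [pcOfCS_coe]
    _ ⊆ closure (interior K) := closure_mono hsupp
    _ ⊆ K := (hKcomp.isClosed.closure_subset_iff).mpr interior_subset
    _ ⊆ W := hKW

/-- pointwise minimum of two C₀ functions -/
noncomputable def pcMin (p q : C₀(Z, ℝ)) : C₀(Z, ℝ) :=
  ⟨⟨fun z => min (p z) (q z), p.continuous.min q.continuous⟩, by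
    simpa using p.zero_at_infty'.min q.zero_at_infty'⟩

@[simp] lemma pcMin_apply (p q : C₀(Z, ℝ)) (z : Z) : pcMin p q z = min (p z) (q z) := rfl

/-- pointwise positive part -/
noncomputable def pcPos (p : C₀(Z, ℝ)) : C₀(Z, ℝ) :=
  ⟨⟨fun z => max (p z) 0, p.continuous.max continuous_const⟩, by
    simpa using p.zero_at_infty'.max (tendsto_const_nhds : Tendsto (fun _ : Z => (0:ℝ)) (cocompact Z) (𝓝 0))⟩

@[simp] lemma pcPos_apply (p : C₀(Z, ℝ)) (z : Z) : pcPos p z = max (p z) 0 := rfl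

/-- (p - δ)⁺ for a constant δ ≥ 0 -/
noncomputable def pcShift (p : C₀(Z, ℝ)) (δ : ℝ) (hδ : 0 ≤ δ) : C₀(Z, ℝ) :=
  ⟨⟨fun z => max (p z - δ) 0, (p.continuous.sub continuous_const).max continuous_const⟩, by
    have h1 : Tendsto (fun z => max (p z - δ) 0) (cocompact Z) (𝓝 (max (0 - δ) 0)) :=
      (p.zero_at_infty'.sub_const δ).max tendsto_const_nhds
    simpa [zero_sub, max_eq_right (neg_nonpos.mpr hδ)] using h1⟩

@[simp] lemma pcShift_apply (p : C₀(Z, ℝ)) (δ : ℝ) (hδ : 0 ≤ δ) (z : Z) :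
    pcShift p δ hδ z = max (p z - δ) 0 := rfl

/-- min(p, δ) for a constant δ ≥ 0 -/
noncomputable def pcMinConst (p : C₀(Z, ℝ)) (δ : ℝ) (hδ : 0 ≤ δ) : C₀(Z, ℝ) :=
  ⟨⟨fun z => min (p z) δ, p.continuous.min continuous_const⟩, by
    have h1 : Tendsto (fun z => min (p z) δ) (cocompact Z) (𝓝 (min 0 δ)) :=
      p.zero_at_infty'.min tendsto_const_nhds
    simpa [min_eq_left hδ] using h1⟩

@[simp] lemma pcMinConst_apply (p : C₀(Z, ℝ)) (δ : ℝ) (hδ : 0 ≤ δ) (z : Z) :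
    pcMinConst p δ hδ z = min (p z) δ := rfl

-- cone algebra
lemma pc_zero_mem : (0 : C₀(Z, ℝ)) ∈ posCone Z := fun z => le_refl 0
lemma pc_add_mem {p q : C₀(Z, ℝ)} (hp : p ∈ posCone Z) (hq : q ∈ posCone Z) :
    p + q ∈ posCone Z := fun z => by
  have := hp z; have := hq z
  simp only [ZeroAtInftyContinuousMap.add_apply]; linarith
lemma pc_smul_mem {p : C₀(Z, ℝ)} (hp : p ∈ posCone Z) {c : ℝ} (hc : 0 ≤ c) :
    c • p ∈ posCone Z := fun z => by
  simp only [ZeroAtInftyContinuousMap.smul_apply, smul_eq_mul]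
  exact mul_nonneg hc (hp z)
lemma pc_sub_mem {p q : C₀(Z, ℝ)} (hpq : ∀ z, p z ≤ q z) : q - p ∈ posCone Z := fun z => by
  simp only [ZeroAtInftyContinuousMap.sub_apply]; linarith [hpq z]

lemma pc_bump_one [T2Space Z] [LocallyCompactSpace Z] {z₀ : Z} {W : Set Z}
    (hW : IsOpen W) (hz : z₀ ∈ W) :
    ∃ v : C₀(Z, ℝ), v ∈ posCone Z ∧ (∀ z, v z ≤ 1) ∧ tsupport ⇑v ⊆ W ∧
      IsCompact (tsupport ⇑v) ∧ v z₀ = 1 := by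
  obtain ⟨v, h1, h2, h3, h4, V, hV, hzV, hV1⟩ := pc_bump hW hz
  exact ⟨v, h1, h2, h3, h4, hV1 z₀ hzV⟩

lemma pc_disjoint_bump [T2Space Z] [LocallyCompactSpace Z] (v : C₀(Z, ℝ)) {z : Z}
    (hz : z ∉ tsupport ⇑v) :
    ∃ w : C₀(Z, ℝ), w ∈ posCone Z ∧ (∀ z', w z' ≤ 1) ∧ w z = 1 ∧
      ∀ y, v y = 0 ∨ w y = 0 := by
  obtain ⟨w, h1, h2, h3, _, h5⟩ :=
    pc_bump_one (isOpen_compl_iff.mpr (isClosed_tsupport ⇑v)) hz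
  refine ⟨w, h1, h2, h5, fun y => ?_⟩
  by_cases hy : y ∈ tsupport ⇑v
  · exact Or.inr (image_eq_zero_of_notMem_tsupport (fun hmem => (h3 hmem) hy))
  · exact Or.inl (image_eq_zero_of_notMem_tsupport hy)

end Toolkit2

set_option linter.unusedSectionVars false

section Additivity

variable {X Y : Type*} [TopologicalSpace X] [T2Space X] [LocallyCompactSpace X]
  [TopologicalSpace Y] [T2Space Y] [LocallyCompactSpace Y]

/-- bundled hypotheses on the pair (T, S = T⁻¹) -/
structure GoodPair (T : C₀(X, ℝ) → C₀(Y, ℝ)) (S : C₀(Y, ℝ) → C₀(X, ℝ)) : Prop where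
  mapsT : ∀ f ∈ posCone X, T f ∈ posCone Y
  mapsS : ∀ u ∈ posCone Y, S u ∈ posCone X
  TS : ∀ u ∈ posCone Y, T (S u) = u
  hnorm : ∀ f ∈ posCone X, ∀ g ∈ posCone X, ‖T (f + g)‖ = ‖T f + T g‖

variable {T : C₀(X, ℝ) → C₀(Y, ℝ)} {S : C₀(Y, ℝ) → C₀(X, ℝ)}

/-- the transported addition on the cone of Y -/
noncomputable def bb (T : C₀(X, ℝ) → C₀(Y, ℝ)) (S : C₀(Y, ℝ) → C₀(X, ℝ))
    (a b : C₀(Y, ℝ)) : C₀(Y, ℝ) := T (S a + S b)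

namespace GoodPair

lemma bb_mem (hg : GoodPair T S) {a b : C₀(Y, ℝ)} (ha : a ∈ posCone Y) (hb : b ∈ posCone Y) :
    bb T S a b ∈ posCone Y :=
  hg.mapsT _ (pc_add_mem (hg.mapsS a ha) (hg.mapsS b hb))

lemma bb_comm (hg : GoodPair T S) (a b : C₀(Y, ℝ)) : bb T S a b = bb T S b a := by
  unfold bb; rw [add_comm]

lemma bb_norm (hg : GoodPair T S) {a b : C₀(Y, ℝ)} (ha : a ∈ posCone Y) (hb : b ∈ posCone Y) :
    ‖bb T S a b‖ = ‖a + b‖ := by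
  unfold bb
  rw [hg.hnorm _ (hg.mapsS a ha) _ (hg.mapsS b hb), hg.TS a ha, hg.TS b hb]

lemma bb_key (hg : GoodPair T S) {a b c : C₀(Y, ℝ)} (ha : a ∈ posCone Y)
    (hb : b ∈ posCone Y) (hc : c ∈ posCone Y) :
    ‖bb T S a b + c‖ = ‖a + bb T S b c‖ := by
  have h1 : ‖T (S a + S b + S c)‖ = ‖T (S a + S b) + T (S c)‖ :=
    hg.hnorm _ (pc_add_mem (hg.mapsS a ha) (hg.mapsS b hb)) _ (hg.mapsS c hc)
  have h2 : ‖T (S a + (S b + S c))‖ = ‖T (S a) + T (S b + S c)‖ :=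
    hg.hnorm _ (hg.mapsS a ha) _ (pc_add_mem (hg.mapsS b hb) (hg.mapsS c hc))
  rw [hg.TS c hc] at h1
  rw [hg.TS a ha] at h2
  rw [add_assoc] at h1
  exact (h1.symm.trans h2 : _)

/-- localization: `b ⊞ R•v` is at most `‖b‖` away from the support of `v`. -/
lemma bb_loc [Nonempty Y] (hg : GoodPair T S) {b v w : C₀(Y, ℝ)} {R : ℝ} {z : Y}
    (hb : b ∈ posCone Y) (hv : v ∈ posCone Y) (hv1 : ∀ y, v y ≤ 1)
    (hR : 0 < R) (hw : w ∈ posCone Y) (hw1 : ∀ y, w y ≤ 1) (hwz : w z = 1)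
    (hdisj : ∀ y, v y = 0 ∨ w y = 0) :
    bb T S b (R • v) z ≤ ‖b‖ := by
  have hRv : R • v ∈ posCone Y := pc_smul_mem hv hR.le
  have hRw : R • w ∈ posCone Y := pc_smul_mem hw hR.le
  have h1 : ‖bb T S b (R • v) + R • w‖ = ‖b + bb T S (R • v) (R • w)‖ :=
    hg.bb_key hb hRv hRw
  have h2 : ‖b + bb T S (R • v) (R • w)‖ ≤ ‖b‖ + R := by
    refine le_trans (norm_add_le _ _) ?_
    rw [hg.bb_norm hRv hRw]
    have : ‖R • v + R • w‖ ≤ R := by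
      apply pc_norm_le' (pc_add_mem hRv hRw) hR.le
      intro y
      simp only [ZeroAtInftyContinuousMap.add_apply, ZeroAtInftyContinuousMap.smul_apply,
        smul_eq_mul]
      rcases hdisj y with h | h
      · rw [h, mul_zero, zero_add]
        calc R * w y ≤ R * 1 := mul_le_mul_of_nonneg_left (hw1 y) hR.le
          _ = R := mul_one R
      · rw [h, mul_zero, add_zero]
        calc R * v y ≤ R * 1 := mul_le_mul_of_nonneg_left (hv1 y) hR.le
          _ = R := mul_one R
    linarith
  have h3 : bb T S b (R • v) z + R ≤ ‖bb T S b (R • v) + R • w‖ := by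
    have := pc_le_norm (pc_add_mem (hg.bb_mem hb hRv) hRw) z
    simp only [ZeroAtInftyContinuousMap.add_apply, ZeroAtInftyContinuousMap.smul_apply,
      smul_eq_mul, hwz, mul_one] at this
    exact this
  linarith [h1 ▸ h3]

lemma pc_norm_le_norm_add [Nonempty Y] {a b : C₀(Y, ℝ)} (ha : a ∈ posCone Y)
    (hb : b ∈ posCone Y) : ‖b‖ ≤ ‖a + b‖ := by
  obtain ⟨z, hz⟩ := pc_attain hb
  have h1 := pc_le_norm (pc_add_mem ha hb) z
  simp only [ZeroAtInftyContinuousMap.add_apply] at h1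
  linarith [ha z]

/-- upper pointwise bound for bb -/
lemma bb_le [Nonempty Y] (hg : GoodPair T S) {a b : C₀(Y, ℝ)} (ha : a ∈ posCone Y)
    (hb : b ∈ posCone Y) (y : Y) : bb T S a b y ≤ a y + b y := by
  have key : ∀ ε > 0, bb T S a b y ≤ a y + b y + 2 * ε := by
    intro ε hε
    have hWopen : IsOpen ({z | a z < a y + ε} ∩ {z | b z < b y + ε}) :=
      (isOpen_lt a.continuous continuous_const).inter (isOpen_lt b.continuous continuous_const)
    have hyW : y ∈ ({z | a z < a y + ε} ∩ {z | b z < b y + ε}) :=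
      ⟨lt_add_of_pos_right _ hε, lt_add_of_pos_right _ hε⟩
    obtain ⟨v, hv, hv1, hvsupp, hvcomp, hvy⟩ := pc_bump_one hWopen hyW
    set R := ‖a‖ + ‖b‖ + 1 with hRdef
    have hR : (0:ℝ) < R := by positivity
    have hRv : R • v ∈ posCone Y := pc_smul_mem hv hR.le
    have hay : 0 ≤ a y := ha y
    have hby : 0 ≤ b y := hb y
    have h1 : bb T S a b y + R ≤ ‖bb T S a b + R • v‖ := by
      have h := pc_le_norm (pc_add_mem (hg.bb_mem ha hb) hRv) y
      simp only [ZeroAtInftyContinuousMap.add_apply, ZeroAtInftyContinuousMap.smul_apply,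
        smul_eq_mul, hvy, mul_one] at h
      exact h
    have h2 : ‖bb T S a b + R • v‖ = ‖b + bb T S a (R • v)‖ := by
      rw [hg.bb_comm a b]
      exact hg.bb_key hb ha hRv
    have hnat : ‖a + R • v‖ ≤ a y + ε + R := by
      apply pc_norm_le' (pc_add_mem ha hRv) (by positivity)
      intro z
      simp only [ZeroAtInftyContinuousMap.add_apply, ZeroAtInftyContinuousMap.smul_apply,
        smul_eq_mul]
      by_cases hz : z ∈ tsupport ⇑v
      · have haz : a z < a y + ε := (hvsupp hz).1
        have hvle : R * v z ≤ R := by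
          calc R * v z ≤ R * 1 := mul_le_mul_of_nonneg_left (hv1 z) hR.le
            _ = R := mul_one R
        linarith
      · have hz0 : v z = 0 := image_eq_zero_of_notMem_tsupport hz
        rw [hz0, mul_zero, add_zero]
        have h3 := pc_le_norm ha z
        have h4 : (0:ℝ) ≤ ‖b‖ := norm_nonneg b
        rw [hRdef]
        linarith
    have h3 : ‖b + bb T S a (R • v)‖ ≤ a y + b y + 2 * ε + R := by
      apply pc_norm_le' (pc_add_mem hb (hg.bb_mem ha hRv)) (by positivity)
      intro z
      simp only [ZeroAtInftyContinuousMap.add_apply]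
      by_cases hz : z ∈ tsupport ⇑v
      · have hbz : b z < b y + ε := (hvsupp hz).2
        have h4 : bb T S a (R • v) z ≤ ‖bb T S a (R • v)‖ := pc_le_norm (hg.bb_mem ha hRv) z
        rw [hg.bb_norm ha hRv] at h4
        linarith [hnat]
      · obtain ⟨w, hw, hw1, hwz, hdisj⟩ := pc_disjoint_bump v hz
        have hloc := hg.bb_loc ha hv hv1 hR hw hw1 hwz hdisj
        have h5 := pc_le_norm hb z
        rw [hRdef]
        linarith
    linarith
  refine le_of_forall_pos_le_add (fun ε hε => ?_)
  have := key (ε / 2) (by linarith)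
  linarith

/-- lower pointwise bound for bb -/
lemma bb_ge [Nonempty Y] (hg : GoodPair T S) {a b : C₀(Y, ℝ)} (ha : a ∈ posCone Y)
    (hb : b ∈ posCone Y) (y : Y) : a y + b y ≤ bb T S a b y := by
  have key : ∀ ε > 0, a y + b y ≤ bb T S a b y + 2 * ε := by
    intro ε hε
    have hWopen : IsOpen ({z | a y - ε < a z} ∩ {z | bb T S a b z < bb T S a b y + ε}) :=
      (isOpen_lt continuous_const a.continuous).inter
        (isOpen_lt (bb T S a b).continuous continuous_const)
    have hyW : y ∈ ({z | a y - ε < a z} ∩ {z | bb T S a b z < bb T S a b y + ε}) :=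
      ⟨by simp only [Set.mem_setOf_eq]; linarith, lt_add_of_pos_right _ hε⟩
    obtain ⟨v, hv, hv1, hvsupp, hvcomp, hvy⟩ := pc_bump_one hWopen hyW
    set R := ‖bb T S a b‖ + ‖b‖ + 1 with hRdef
    have hR : (0:ℝ) < R := by positivity
    have hRv : R • v ∈ posCone Y := pc_smul_mem hv hR.le
    set d := bb T S b (R • v) with hddef
    have hd : d ∈ posCone Y := hg.bb_mem hb hRv
    have hdnorm : ‖d‖ = ‖b + R • v‖ := hg.bb_norm hb hRv
    have hdnormle : ‖d‖ ≤ ‖b‖ + R := by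
      rw [hdnorm]
      refine le_trans (norm_add_le _ _) ?_
      have : ‖R • v‖ ≤ R := by
        apply pc_norm_le' hRv hR.le
        intro z
        simp only [ZeroAtInftyContinuousMap.smul_apply, smul_eq_mul]
        calc R * v z ≤ R * 1 := mul_le_mul_of_nonneg_left (hv1 z) hR.le
          _ = R := mul_one R
      linarith
    -- Step (i): d y ≥ R
    have hdy : R ≤ d y := by
      by_contra hcon
      push_neg at hcon
      have hW2open : IsOpen {z | d z < R} := isOpen_lt d.continuous continuous_const
      obtain ⟨w, hw, hw1, hwsupp, hwcomp, hwy⟩ := pc_bump_one hW2open hcon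
      set R' := ‖b‖ + 1 with hR'def
      have hR' : (0:ℝ) < R' := by positivity
      have hR'w : R' • w ∈ posCone Y := pc_smul_mem hw hR'.le
      have hkey : ‖d + R' • w‖ = ‖b + bb T S (R • v) (R' • w)‖ := hg.bb_key hb hRv hR'w
      have hlow : R + R' ≤ ‖d + R' • w‖ := by
        rw [hkey]
        refine le_trans ?_ (pc_norm_le_norm_add hb (hg.bb_mem hRv hR'w))
        rw [hg.bb_norm hRv hR'w]
        have h6 := pc_le_norm (pc_add_mem hRv hR'w) y
        simp only [ZeroAtInftyContinuousMap.add_apply, ZeroAtInftyContinuousMap.smul_apply,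
          smul_eq_mul, hvy, hwy, mul_one] at h6
        exact h6
      have hup : ‖d + R' • w‖ < R + R' := by
        have hwsne : (tsupport ⇑w).Nonempty := by
          refine ⟨y, subset_closure ?_⟩
          simp only [Function.mem_support, hwy]
          exact one_ne_zero
        obtain ⟨zm, hzm, hzmax⟩ := hwcomp.exists_isMaxOn hwsne d.continuous.continuousOn
        have hzmlt : d zm < R := hwsupp hzm
        have hbound : ‖d + R' • w‖ ≤ max (d zm + R') (‖b‖ + R) := by
          apply pc_norm_le' (pc_add_mem hd hR'w)
            (le_trans (by positivity) (le_max_right (d zm + R') (‖b‖ + R)))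
          intro z
          simp only [ZeroAtInftyContinuousMap.add_apply, ZeroAtInftyContinuousMap.smul_apply,
            smul_eq_mul]
          by_cases hz : z ∈ tsupport ⇑w
          · refine le_trans ?_ (le_max_left _ _)
            have h7 : d z ≤ d zm := hzmax hz
            have h8 : R' * w z ≤ R' := by
              calc R' * w z ≤ R' * 1 := mul_le_mul_of_nonneg_left (hw1 z) hR'.le
                _ = R' := mul_one R'
            linarith
          · have hz0 : w z = 0 := image_eq_zero_of_notMem_tsupport hz
            rw [hz0, mul_zero, add_zero]
            refine le_trans ?_ (le_max_right _ _)
            calc d z ≤ ‖d‖ := pc_le_norm hd z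
              _ ≤ ‖b‖ + R := hdnormle
        have hmaxlt : max (d zm + R') (‖b‖ + R) < R + R' := by
          apply max_lt
          · linarith
          · rw [hR'def]; linarith
        linarith
      linarith
    -- Step (ii): the peak of d lies in the support of v
    obtain ⟨zs, hzs⟩ := pc_attain hd
    have hzssup : zs ∈ tsupport ⇑v := by
      by_contra hcon
      obtain ⟨w, hw, hw1, hwz, hdisj⟩ := pc_disjoint_bump v hcon
      have hloc := hg.bb_loc hb hv hv1 hR hw hw1 hwz hdisj
      rw [← hddef] at hloc
      have h9 : R ≤ d zs := by
        rw [hzs]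
        exact le_trans hdy (pc_le_norm hd y)
      have h10 : (0:ℝ) ≤ ‖bb T S a b‖ := norm_nonneg _
      rw [hRdef] at h9
      linarith
    have hzsW : a y - ε < a zs := (hvsupp hzssup).1
    -- Step (iii)
    have hIII : ‖bb T S a b + R • v‖ ≤ bb T S a b y + ε + R := by
      apply pc_norm_le' (pc_add_mem (hg.bb_mem ha hb) hRv)
        (by have := (hg.bb_mem ha hb) y; positivity)
      intro z
      simp only [ZeroAtInftyContinuousMap.add_apply, ZeroAtInftyContinuousMap.smul_apply,
        smul_eq_mul]
      by_cases hz : z ∈ tsupport ⇑v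
      · have h11 : bb T S a b z < bb T S a b y + ε := (hvsupp hz).2
        have h12 : R * v z ≤ R := by
          calc R * v z ≤ R * 1 := mul_le_mul_of_nonneg_left (hv1 z) hR.le
            _ = R := mul_one R
        linarith
      · have hz0 : v z = 0 := image_eq_zero_of_notMem_tsupport hz
        rw [hz0, mul_zero, add_zero]
        have h13 := pc_le_norm (hg.bb_mem ha hb) z
        have h14 : (0:ℝ) ≤ ‖b‖ := norm_nonneg b
        have h15 : 0 ≤ bb T S a b y + ε := by have := (hg.bb_mem ha hb) y; linarith
        rw [hRdef]
        linarith
    -- Step (iv)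
    have hIV : a y - ε + (b y + R) ≤ ‖bb T S a b + R • v‖ := by
      have hkey2 : ‖bb T S a b + R • v‖ = ‖a + d‖ := hg.bb_key ha hb hRv
      rw [hkey2]
      have h16 := pc_le_norm (pc_add_mem ha hd) zs
      simp only [ZeroAtInftyContinuousMap.add_apply] at h16
      have h17 : b y + R ≤ ‖d‖ := by
        rw [hdnorm]
        have h18 := pc_le_norm (pc_add_mem hb hRv) y
        simp only [ZeroAtInftyContinuousMap.add_apply, ZeroAtInftyContinuousMap.smul_apply,
          smul_eq_mul, hvy, mul_one] at h18
        exact h18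
      rw [hzs] at *
      linarith
    linarith
  refine le_of_forall_pos_le_add (fun ε hε => ?_)
  have := key (ε / 2) (by linarith)
  linarith

/-- T is additive on the positive cone -/
lemma T_add [Nonempty Y] (hg : GoodPair T S) (hST : ∀ f ∈ posCone X, S (T f) = f)
    {f g : C₀(X, ℝ)} (hf : f ∈ posCone X) (hgg : g ∈ posCone X) :
    T (f + g) = T f + T g := by
  have ha : T f ∈ posCone Y := hg.mapsT f hf
  have hb : T g ∈ posCone Y := hg.mapsT g hgg
  have h1 : bb T S (T f) (T g) = T f + T g := by
    apply ZeroAtInftyContinuousMap.ext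
    intro y
    have h2 := hg.bb_le (S := S) ha hb y
    have h3 := hg.bb_ge (S := S) ha hb y
    simp only [ZeroAtInftyContinuousMap.add_apply]
    linarith
  have h4 : bb T S (T f) (T g) = T (f + g) := by
    unfold bb
    rw [hST f hf, hST g hgg]
  rw [← h4, h1]

end GoodPair

end Additivity

set_option linter.unusedSectionVars false
set_option maxHeartbeats 1000000

section OneMap

variable {α β : Type*} [TopologicalSpace α] [TopologicalSpace β]
  (A : C₀(α, ℝ) → C₀(β, ℝ))
  (hmaps : ∀ f ∈ posCone α, A f ∈ posCone β)
  (hadd : ∀ f ∈ posCone α, ∀ g ∈ posCone α, A (f + g) = A f + A g)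

include hmaps hadd

lemma A_zero : A 0 = 0 := by
  have h := hadd 0 pc_zero_mem 0 pc_zero_mem
  rw [add_zero] at h
  have h2 : A 0 + 0 = A 0 + A 0 := by rw [add_zero]; exact h
  exact (add_left_cancel h2).symm

lemma A_mono {f g : C₀(α, ℝ)} (hf : f ∈ posCone α) (hfg : ∀ x, f x ≤ g x) (z : β) :
    A f z ≤ A g z := by
  have hgmem : g = f + (g - f) := by
    apply ZeroAtInftyContinuousMap.ext
    intro x
    simp only [ZeroAtInftyContinuousMap.add_apply, ZeroAtInftyContinuousMap.sub_apply]
    ring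
  have h := hadd f hf (g - f) (pc_sub_mem hfg)
  rw [← hgmem] at h
  rw [h]
  simp only [ZeroAtInftyContinuousMap.add_apply]
  have := hmaps (g - f) (pc_sub_mem hfg) z
  linarith

lemma A_nsmul (n : ℕ) {f : C₀(α, ℝ)} (hf : f ∈ posCone α) :
    A ((n : ℝ) • f) = (n : ℝ) • A f := by
  induction n with
  | zero => simp only [Nat.cast_zero, zero_smul]; exact A_zero A hmaps hadd
  | succ n ih =>
      have h1 : ((n + 1 : ℕ) : ℝ) • f = (n : ℝ) • f + f := by
        apply ZeroAtInftyContinuousMap.ext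
        intro x
        simp only [ZeroAtInftyContinuousMap.add_apply, ZeroAtInftyContinuousMap.smul_apply,
          smul_eq_mul]
        push_cast
        ring
      rw [h1, hadd _ (pc_smul_mem hf (by positivity)) f hf, ih]
      apply ZeroAtInftyContinuousMap.ext
      intro x
      simp only [ZeroAtInftyContinuousMap.add_apply, ZeroAtInftyContinuousMap.smul_apply,
        smul_eq_mul]
      push_cast
      ring

lemma A_qsmul (q : ℚ) (hq : 0 ≤ q) {f : C₀(α, ℝ)} (hf : f ∈ posCone α) :
    A ((q : ℝ) • f) = (q : ℝ) • A f := by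
  have hqR : (0 : ℝ) ≤ (q : ℝ) := by exact_mod_cast hq
  set m := q.num.toNat with hm
  set n := q.den with hn
  have hn0 : (n : ℝ) ≠ 0 := by
    simp only [hn]
    exact_mod_cast q.den_nz
  have hmq : ((m : ℤ) : ℝ) = ((q.num : ℤ) : ℝ) := by
    rw [hm]
    norm_cast
    exact Int.toNat_of_nonneg (Rat.num_nonneg.mpr hq)
  have hnq : (n : ℝ) * (q : ℝ) = (m : ℝ) := by
    rw [Rat.cast_def]
    field_simp
    push_cast at hmq ⊢
    rw [← hn, hmq]
  have h3 : (n : ℝ) • ((q : ℝ) • f) = (m : ℝ) • f := by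
    apply ZeroAtInftyContinuousMap.ext
    intro x
    simp only [ZeroAtInftyContinuousMap.smul_apply, smul_eq_mul]
    rw [← mul_assoc, hnq]
  have h2 := A_nsmul A hmaps hadd n (pc_smul_mem hf hqR)
  rw [h3, A_nsmul A hmaps hadd m hf] at h2
  apply ZeroAtInftyContinuousMap.ext
  intro z
  have hz := DFunLike.congr_fun h2 z
  simp only [ZeroAtInftyContinuousMap.smul_apply, smul_eq_mul] at hz ⊢
  apply mul_left_cancel₀ hn0
  calc (n : ℝ) * (A ((q : ℝ) • f) z) = (m : ℝ) * A f z := hz.symm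
    _ = ((n : ℝ) * (q : ℝ)) * A f z := by rw [hnq]
    _ = (n : ℝ) * ((q : ℝ) * A f z) := by ring

lemma A_rsmul (c : ℝ) (hc : 0 ≤ c) {f : C₀(α, ℝ)} (hf : f ∈ posCone α) :
    A (c • f) = c • A f := by
  have hub : ∀ q : ℚ, c ≤ (q : ℝ) → ∀ z, A (c • f) z ≤ (q : ℝ) * A f z := by
    intro q hq z
    have hq0 : (0 : ℝ) ≤ (q : ℝ) := le_trans hc hq
    have hmono := A_mono A hmaps hadd (pc_smul_mem hf hc)
      (g := (q : ℝ) • f) (fun x => by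
        simp only [ZeroAtInftyContinuousMap.smul_apply, smul_eq_mul]
        exact mul_le_mul_of_nonneg_right hq (hf x)) z
    have hq0' : (0 : ℚ) ≤ q := by exact_mod_cast hq0
    rw [A_qsmul A hmaps hadd q hq0' hf] at hmono
    simpa only [ZeroAtInftyContinuousMap.smul_apply, smul_eq_mul] using hmono
  have hlb : ∀ q : ℚ, 0 ≤ q → (q : ℝ) ≤ c → ∀ z, (q : ℝ) * A f z ≤ A (c • f) z := by
    intro q hq0 hqc z
    have hq0R : (0 : ℝ) ≤ (q : ℝ) := by exact_mod_cast hq0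
    have hmono := A_mono A hmaps hadd (pc_smul_mem hf hq0R)
      (g := c • f) (fun x => by
        simp only [ZeroAtInftyContinuousMap.smul_apply, smul_eq_mul]
        exact mul_le_mul_of_nonneg_right hqc (hf x)) z
    rw [A_qsmul A hmaps hadd q hq0 hf] at hmono
    simpa only [ZeroAtInftyContinuousMap.smul_apply, smul_eq_mul] using hmono
  apply ZeroAtInftyContinuousMap.ext
  intro z
  simp only [ZeroAtInftyContinuousMap.smul_apply, smul_eq_mul]
  have hAfz : 0 ≤ A f z := hmaps f hf z
  have hAcfz : 0 ≤ A (c • f) z := hmaps _ (pc_smul_mem hf hc) z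
  apply le_antisymm
  · -- A (c•f) z ≤ c * A f z
    by_contra hcon
    push_neg at hcon
    rcases eq_or_lt_of_le hAfz with h0 | h0
    · obtain ⟨q, hq⟩ := exists_rat_gt c
      have := hub q hq.le z
      rw [← h0, mul_zero] at this hcon
      linarith
    · set ε := A (c • f) z - c * A f z with hε
      have hεpos : 0 < ε := by rw [hε]; linarith
      obtain ⟨q, hq1, hq2⟩ := exists_rat_btwn (show c < c + ε / A f z by
        have := div_pos hεpos h0; linarith)
      have := hub q hq1.le z
      have h4 : (q : ℝ) * A f z < (c + ε / A f z) * A f z :=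
        mul_lt_mul_of_pos_right hq2 h0
      rw [add_mul, div_mul_cancel₀ _ (ne_of_gt h0)] at h4
      rw [hε] at h4
      linarith
  · -- c * A f z ≤ A (c•f) z
    rcases eq_or_lt_of_le hc with hc0 | hc0
    · have hz' : c * A f z = 0 := by rw [← hc0, zero_mul]
      rw [hz']; exact hAcfz
    by_contra hcon
    push_neg at hcon
    have h0 : 0 < A f z := by
      rcases eq_or_lt_of_le hAfz with h0 | h0
      · rw [← h0, mul_zero] at hcon; linarith
      · exact h0
    set ε := c * A f z - A (c • f) z with hε
    have hεpos : 0 < ε := by rw [hε]; linarith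
    have hlow : 0 ≤ c - ε / A f z := by
      have : ε / A f z = (c * A f z - A (c • f) z) / A f z := by rw [hε]
      rw [this, sub_div, mul_div_cancel_right₀ _ (ne_of_gt h0)]
      have : 0 ≤ A (c • f) z / A f z := by positivity
      linarith
    obtain ⟨q, hq1, hq2⟩ := exists_rat_btwn (show c - ε / A f z < c by
      have : 0 < ε / A f z := by positivity
      linarith)
    have hq0 : (0 : ℚ) ≤ q := by
      have : (0 : ℝ) ≤ (q : ℝ) := le_trans hlow hq1.le
      exact_mod_cast this
    have := hlb q hq0 hq2.le z
    have h4 : (c - ε / A f z) * A f z < (q : ℝ) * A f z :=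
      mul_lt_mul_of_pos_right hq1 h0
    rw [sub_mul, div_mul_cancel₀ _ (ne_of_gt h0)] at h4
    rw [hε] at h4
    linarith

/-- An additive cone-preserving map is bounded. -/
lemma A_bounded : ∃ C : ℝ, 0 < C ∧ ∀ f ∈ posCone α, ‖A f‖ ≤ C * ‖f‖ := by
  by_contra hcon
  push_neg at hcon
  choose F hFmem hFlt using fun n : ℕ => hcon ((4 : ℝ) ^ n) (by positivity)
  have hFpos : ∀ n, 0 < ‖F n‖ := by
    intro n
    rcases eq_or_lt_of_le (norm_nonneg (F n)) with h0 | h0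
    · exfalso
      have hF0 : F n = 0 := norm_eq_zero.mp h0.symm
      have := hFlt n
      rw [hF0, A_zero A hmaps hadd] at this
      simp at this
    · exact h0
  have hhalf : ∀ n : ℕ, ((1:ℝ)/2) ^ (n+1) < ((1:ℝ)/2) ^ n := fun n =>
    pow_lt_pow_right_of_lt_one₀ (by norm_num) (by norm_num) (Nat.lt_succ_self n)
  have hq : ∀ n : ℕ, ∃ qn : ℚ, ((1:ℝ)/2) ^ (n+1) / ‖F n‖ < (qn : ℝ) ∧
      (qn : ℝ) < ((1:ℝ)/2) ^ n / ‖F n‖ := fun n =>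
    exists_rat_btwn ((div_lt_div_iff_of_pos_right (hFpos n)).mpr (hhalf n))
  choose q hq1 hq2 using hq
  have hqpos : ∀ n, (0:ℝ) < (q n : ℝ) := fun n =>
    lt_trans (div_pos (by positivity) (hFpos n)) (hq1 n)
  set g : ℕ → C₀(α, ℝ) := fun n => ((q n : ℝ)) • F n with hgdef
  have hgmem : ∀ n, g n ∈ posCone α := fun n => pc_smul_mem (hFmem n) (hqpos n).le
  have hgnorm : ∀ n, ‖g n‖ ≤ ((1:ℝ)/2) ^ n := by
    intro n
    have he : ‖g n‖ = (q n : ℝ) * ‖F n‖ := by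
      rw [hgdef]
      simp only []
      rw [pc_norm_smul, abs_of_pos (hqpos n)]
    rw [he, ← div_mul_cancel₀ (((1:ℝ)/2) ^ n) (ne_of_gt (hFpos n))]
    exact mul_le_mul_of_nonneg_right (le_of_lt (hq2 n)) (norm_nonneg (F n))
  have hAgnorm : ∀ n, (2:ℝ) ^ n / 2 < ‖A (g n)‖ := by
    intro n
    have h1 : A (g n) = (q n : ℝ) • A (F n) := A_rsmul A hmaps hadd _ (hqpos n).le (hFmem n)
    rw [h1, pc_norm_smul, abs_of_pos (hqpos n)]
    have h2 : ((1:ℝ)/2) ^ (n+1) < (q n : ℝ) * ‖F n‖ := by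
      have := (div_lt_iff₀ (hFpos n)).mp (hq1 n)
      linarith
    have h3 : (q n : ℝ) * ((4:ℝ) ^ n * ‖F n‖) < (q n : ℝ) * ‖A (F n)‖ :=
      mul_lt_mul_of_pos_left (hFlt n) (hqpos n)
    have h4 : (4:ℝ) ^ n * ((1:ℝ)/2) ^ (n+1) = 2 ^ n / 2 := by
      have e4 : (4:ℝ) ^ n = 2 ^ n * 2 ^ n := by rw [← mul_pow]; norm_num
      have e2 : ((1:ℝ)/2) ^ (n+1) = 1 / (2 ^ n * 2) := by
        rw [div_pow, one_pow, pow_succ]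
      rw [e4, e2]
      have h2n : (2:ℝ) ^ n ≠ 0 := by positivity
      field_simp
    have h5 : (4:ℝ) ^ n * ((1:ℝ)/2) ^ (n+1) ≤ (4:ℝ) ^ n * ((q n : ℝ) * ‖F n‖) :=
      mul_le_mul_of_nonneg_left h2.le (by positivity)
    calc (2:ℝ) ^ n / 2 = (4:ℝ) ^ n * ((1:ℝ)/2) ^ (n+1) := h4.symm
      _ ≤ (4:ℝ) ^ n * ((q n : ℝ) * ‖F n‖) := h5
      _ = (q n : ℝ) * ((4:ℝ) ^ n * ‖F n‖) := by ring
      _ < (q n : ℝ) * ‖A (F n)‖ := h3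
  have hsummable : Summable g := by
    apply Summable.of_norm_bounded
      (summable_geometric_of_lt_one (by norm_num) (by norm_num)) hgnorm
  set G := ∑' n, g n with hGdef
  have hG : Tendsto (fun m => ∑ k ∈ Finset.range m, g k) atTop (𝓝 G) :=
    hsummable.hasSum.tendsto_sum_nat
  have hnorm0 : Tendsto (fun m => ‖(∑ k ∈ Finset.range m, g k) - G‖) atTop (𝓝 0) :=
    tendsto_iff_norm_sub_tendsto_zero.mp hG
  have hptwise : ∀ x, Tendsto (fun m => (∑ k ∈ Finset.range m, g k) x) atTop (𝓝 (G x)) := by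
    intro x
    rw [tendsto_iff_norm_sub_tendsto_zero]
    refine squeeze_zero_norm (fun m => ?_) hnorm0
    rw [norm_norm, Real.norm_eq_abs]
    have h6 := pc_abs_le ((∑ k ∈ Finset.range m, g k) - G) x
    simpa only [ZeroAtInftyContinuousMap.sub_apply] using h6
  have hpartial_mem : ∀ m, (∑ k ∈ Finset.range m, g k) ∈ posCone α := by
    intro m
    induction m with
    | zero => simpa using (pc_zero_mem : (0 : C₀(α,ℝ)) ∈ posCone α)
    | succ m ih =>
        rw [Finset.sum_range_succ]
        exact pc_add_mem ih (hgmem m)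
  have hGmem : G ∈ posCone α := by
    intro x
    apply ge_of_tendsto (hptwise x)
    filter_upwards with m
    exact hpartial_mem m x
  have hGge : ∀ n x, g n x ≤ G x := by
    intro n x
    apply ge_of_tendsto (hptwise x)
    rw [eventually_atTop]
    refine ⟨n + 1, ?_⟩
    intro m hm
    induction m, hm using Nat.le_induction with
    | base =>
        rw [Finset.sum_range_succ]
        have := hpartial_mem n x
        simp only [ZeroAtInftyContinuousMap.add_apply]
        linarith
    | succ m hm ih =>
        rw [Finset.sum_range_succ]
        have := hgmem m x
        simp only [ZeroAtInftyContinuousMap.add_apply]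
        linarith
  have hAle : ∀ n, ‖A (g n)‖ ≤ ‖A G‖ := by
    intro n
    apply pc_norm_le' (hmaps _ (hgmem n)) (norm_nonneg (A G))
    intro z
    calc A (g n) z ≤ A G z := A_mono A hmaps hadd (hgmem n) (hGge n) z
      _ ≤ ‖A G‖ := pc_le_norm (hmaps G hGmem) z
  obtain ⟨n, hn⟩ := pow_unbounded_of_one_lt (2 * ‖A G‖) (one_lt_two (α := ℝ))
  have := hAgnorm n
  have := hAle n
  linarith

end OneMap

set_option linter.unusedSectionVars false
set_option maxHeartbeats 1000000

section Pointwise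

variable {α β : Type*} [TopologicalSpace α] [T2Space α] [LocallyCompactSpace α] [Nonempty α]
  [TopologicalSpace β] [T2Space β] [LocallyCompactSpace β] [Nonempty β]
  (A : C₀(α, ℝ) → C₀(β, ℝ)) (B : C₀(β, ℝ) → C₀(α, ℝ))
  (hApos : ∀ f ∈ posCone α, A f ∈ posCone β)
  (hBpos : ∀ u ∈ posCone β, B u ∈ posCone α)
  (hAB : ∀ u ∈ posCone β, A (B u) = u)
  (hBA : ∀ f ∈ posCone α, B (A f) = f)
  (hAadd : ∀ f ∈ posCone α, ∀ g ∈ posCone α, A (f + g) = A f + A g)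
  (hBadd : ∀ u ∈ posCone β, ∀ v ∈ posCone β, B (u + v) = B u + B v)

include hApos hBpos hAB hBA hAadd hBadd

/-- the pointwise weighted-composition representation of an additive cone bijection -/
theorem A_pointwise (y : β) :
    ∃ x : α, ∃ c : ℝ, 0 < c ∧ ∀ f ∈ posCone α, A f y = c * f x := by
  obtain ⟨C, hC, hCb⟩ := A_bounded A hApos hAadd
  -- the shrink construction
  have shrink : ∀ p ∈ posCone α, 0 < A p y → ∃ p' ∈ posCone α, 0 < A p' y ∧
      ∃ K : Set α, IsCompact K ∧ {x | 0 < p' x} ⊆ K ∧ K ⊆ {x | 0 < p x} := by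
    intro p hp hpy
    set δ := A p y / (2 * C) with hδdef
    have hδ : 0 < δ := by positivity
    refine ⟨pcShift p δ hδ.le, fun x => le_max_right _ _, ?_, {x | δ ≤ p x},
      pc_superlevel_compact p hδ, ?_, fun x hx => lt_of_lt_of_le hδ hx⟩
    · -- 0 < A (pcShift p δ) y
      have hsplit : p = pcShift p δ hδ.le + pcMinConst p δ hδ.le := by
        apply ZeroAtInftyContinuousMap.ext
        intro x
        simp only [ZeroAtInftyContinuousMap.add_apply, pcShift_apply, pcMinConst_apply]
        rcases le_total (p x) δ with h | h
        · rw [max_eq_right (by linarith), min_eq_left h]; ring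
        · rw [max_eq_left (by linarith), min_eq_right h]; ring
      have hmem1 : pcShift p δ hδ.le ∈ posCone α := fun x => le_max_right _ _
      have hmem2 : pcMinConst p δ hδ.le ∈ posCone α := fun x => le_min (hp x) hδ.le
      have hadd2 := hAadd _ hmem1 _ hmem2
      rw [← hsplit] at hadd2
      have hminsmall : ‖A (pcMinConst p δ hδ.le)‖ ≤ C * δ := by
        refine le_trans (hCb _ hmem2) ?_
        have : ‖pcMinConst p δ hδ.le‖ ≤ δ := by
          apply pc_norm_le' hmem2 hδ.le
          intro x
          simp only [pcMinConst_apply]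
          exact min_le_right _ _
        exact mul_le_mul_of_nonneg_left this hC.le
      have h1 : A (pcMinConst p δ hδ.le) y ≤ C * δ :=
        le_trans (pc_le_norm (hApos _ hmem2) y) hminsmall
      have h2 : A p y = A (pcShift p δ hδ.le) y + A (pcMinConst p δ hδ.le) y := by
        rw [hadd2]; simp [ZeroAtInftyContinuousMap.add_apply]
      have h3 : C * δ = A p y / 2 := by rw [hδdef]; field_simp
      linarith
    · -- support inclusion
      intro x hx
      simp only [Set.mem_setOf_eq, pcShift_apply] at hx ⊢
      rcases le_or_gt (p x) δ with h | h
      · exfalso; rw [max_eq_right (by linarith)] at hx; linarith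
      · exact h.le
  -- the family of compact sets
  set 𝒜 : Set (Set α) := {K | IsCompact K ∧ ∃ p ∈ posCone α, 0 < A p y ∧ {x | 0 < p x} ⊆ K}
    with h𝒜def
  -- base element
  obtain ⟨u₀, hu₀, hu₀1, _, _, hu₀y⟩ := pc_bump_one (isOpen_univ (X := β)) (Set.mem_univ y)
  have hp₀ : 0 < A (B u₀) y := by
    rw [hAB u₀ hu₀, hu₀y]; norm_num
  have h𝒜ne : 𝒜.Nonempty := by
    obtain ⟨p', hp', hp'y, K, hK, hKsub, _⟩ := shrink (B u₀) (hBpos u₀ hu₀) hp₀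
    exact ⟨K, hK, p', hp', hp'y, hKsub⟩
  have h𝒜nonempty : ∀ K ∈ 𝒜, K.Nonempty := by
    rintro K ⟨hK, p, hp, hpy, hpsub⟩
    rcases Set.eq_empty_or_nonempty K with h | h
    · exfalso
      have hp0 : p = 0 := by
        apply ZeroAtInftyContinuousMap.ext
        intro x
        rcases eq_or_lt_of_le (hp x) with h0 | h0
        · simp [← h0]
        · exfalso
          have := hpsub h0
          rw [h] at this
          exact this
      rw [hp0, A_zero A hApos hAadd] at hpy
      simp at hpy
    · exact h
  have h𝒜directed : ∀ K₁ ∈ 𝒜, ∀ K₂ ∈ 𝒜, ∃ K₃ ∈ 𝒜, K₃ ⊆ K₁ ∧ K₃ ⊆ K₂ := by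
    rintro K₁ ⟨hK₁, p₁, hp₁, hp₁y, hp₁sub⟩ K₂ ⟨hK₂, p₂, hp₂, hp₂y, hp₂sub⟩
    set u' := pcMin (A p₁) (A p₂) with hu'def
    have hu' : u' ∈ posCone β := fun z => le_min (hApos _ hp₁ z) (hApos _ hp₂ z)
    have hu'y : 0 < u' y := by
      simp only [hu'def, pcMin_apply]
      exact lt_min hp₁y hp₂y
    set p' := B u' with hp'def
    have hp' : p' ∈ posCone α := hBpos u' hu'
    have hAp' : A p' = u' := hAB u' hu'
    have hp'y : 0 < A p' y := by rw [hAp']; exact hu'y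
    have hp'le1 : ∀ x, p' x ≤ p₁ x := by
      intro x
      have := A_mono B hBpos hBadd hu' (g := A p₁)
        (fun z => by simp only [hu'def, pcMin_apply]; exact min_le_left _ _) x
      rwa [hBA p₁ hp₁] at this
    have hp'le2 : ∀ x, p' x ≤ p₂ x := by
      intro x
      have := A_mono B hBpos hBadd hu' (g := A p₂)
        (fun z => by simp only [hu'def, pcMin_apply]; exact min_le_right _ _) x
      rwa [hBA p₂ hp₂] at this
    obtain ⟨p'', hp'', hp''y, K, hK, hKsub, hKsub2⟩ := shrink p' hp' hp'y
    refine ⟨K, ⟨hK, p'', hp'', hp''y, hKsub⟩, ?_, ?_⟩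
    · intro x hx
      exact hp₁sub (lt_of_lt_of_le (hKsub2 hx) (hp'le1 x))
    · intro x hx
      exact hp₂sub (lt_of_lt_of_le (hKsub2 hx) (hp'le2 x))
  -- intersection point
  have hinter : (⋂ K : 𝒜, (K : Set α)).Nonempty := by
    haveI : Nonempty 𝒜 := ⟨⟨h𝒜ne.choose, h𝒜ne.choose_spec⟩⟩
    apply IsCompact.nonempty_iInter_of_directed_nonempty_isCompact_isClosed
    · rintro ⟨K₁, hK₁⟩ ⟨K₂, hK₂⟩
      obtain ⟨K₃, hK₃, h31, h32⟩ := h𝒜directed K₁ hK₁ K₂ hK₂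
      exact ⟨⟨K₃, hK₃⟩, h31, h32⟩
    · rintro ⟨K, hK⟩
      exact h𝒜nonempty K hK
    · rintro ⟨K, hK⟩
      exact hK.1
    · rintro ⟨K, hK⟩
      exact hK.1.isClosed
  obtain ⟨x₀, hx₀⟩ := hinter
  have hx₀mem : ∀ K ∈ 𝒜, x₀ ∈ K := by
    intro K hK
    exact Set.mem_iInter.mp hx₀ ⟨K, hK⟩
  -- Claim A : functions vanishing near x₀ are killed
  have claimA : ∀ q ∈ posCone α, ∀ W : Set α, IsOpen W → x₀ ∈ W → (∀ x ∈ W, q x = 0) →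
      A q y = 0 := by
    intro q hq W hWopen hx₀W hqW
    rcases eq_or_lt_of_le (hApos q hq y) with h0 | h0
    · exact h0.symm
    · exfalso
      obtain ⟨q', hq', hq'y, K, hK, hKsub, hKsub2⟩ := shrink q hq h0
      have hKmem : K ∈ 𝒜 := ⟨hK, q', hq', hq'y, hKsub⟩
      have := hKsub2 (hx₀mem K hKmem)
      have hq0 : q x₀ = 0 := hqW x₀ hx₀W
      simp only [Set.mem_setOf_eq] at this
      linarith
  -- the bump at x₀
  obtain ⟨v, hv, hv1, _, _, V, hVopen, hx₀V, hvV⟩ :=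
    pc_bump (isOpen_univ (X := α)) (Set.mem_univ x₀)
  set c := A v y with hcdef
  have hc0 : 0 ≤ c := hApos v hv y
  -- Claim B
  have claimB : ∀ f ∈ posCone α, A f y = f x₀ * c := by
    intro f hf
    have hup : ∀ ε : ℝ, 0 < ε → A f y ≤ (f x₀ + ε) * c := by
      intro ε hε
      have hs : (0:ℝ) ≤ f x₀ + ε := by have := hf x₀; linarith
      set r := pcPos (f - (f x₀ + ε) • v) with hrdef
      have hr : r ∈ posCone α := fun x => le_max_right _ _
      have hle : ∀ x, f x ≤ ((f x₀ + ε) • v + r) x := by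
        intro x
        simp only [ZeroAtInftyContinuousMap.add_apply, ZeroAtInftyContinuousMap.smul_apply,
          smul_eq_mul, hrdef, pcPos_apply, ZeroAtInftyContinuousMap.sub_apply]
        rcases le_total (f x - (f x₀ + ε) * v x) 0 with h | h
        · rw [max_eq_right h]; linarith
        · rw [max_eq_left h]; linarith
      have hry : A r y = 0 := by
        apply claimA r hr (V ∩ {x | f x < f x₀ + ε})
          (hVopen.inter (isOpen_lt f.continuous continuous_const))
          ⟨hx₀V, by simp only [Set.mem_setOf_eq]; linarith⟩
        intro x hx
        simp only [hrdef, pcPos_apply, ZeroAtInftyContinuousMap.sub_apply,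
          ZeroAtInftyContinuousMap.smul_apply, smul_eq_mul]
        rw [hvV x hx.1, mul_one, max_eq_right]
        have := hx.2
        simp only [Set.mem_setOf_eq] at this
        linarith
      have hmono := A_mono A hApos hAadd hf hle y
      rw [hAadd _ (pc_smul_mem hv hs) r hr] at hmono
      rw [A_rsmul A hApos hAadd _ hs hv] at hmono
      simp only [ZeroAtInftyContinuousMap.add_apply, ZeroAtInftyContinuousMap.smul_apply,
        smul_eq_mul] at hmono
      rw [hry] at hmono
      rw [← hcdef] at hmono
      linarith
    have hdown : ∀ ε : ℝ, 0 < ε → ε ≤ f x₀ → (f x₀ - ε) * c ≤ A f y := by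
      intro ε hε hεf
      set s := f x₀ - ε with hsdef
      have hs : 0 ≤ s := by linarith
      set q := pcPos (s • v - f) with hqdef
      have hq : q ∈ posCone α := fun x => le_max_right _ _
      have hle : ∀ x, (s • v) x ≤ (f + q) x := by
        intro x
        simp only [ZeroAtInftyContinuousMap.add_apply, ZeroAtInftyContinuousMap.smul_apply,
          smul_eq_mul, hqdef, pcPos_apply, ZeroAtInftyContinuousMap.sub_apply]
        rcases le_total (s * v x - f x) 0 with h | h
        · rw [max_eq_right h]; linarith
        · rw [max_eq_left h]; linarith
      have hqy : A q y = 0 := by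
        apply claimA q hq (V ∩ {x | s < f x})
          (hVopen.inter (isOpen_lt continuous_const f.continuous))
          ⟨hx₀V, by simp only [Set.mem_setOf_eq]; linarith⟩
        intro x hx
        simp only [hqdef, pcPos_apply, ZeroAtInftyContinuousMap.sub_apply,
          ZeroAtInftyContinuousMap.smul_apply, smul_eq_mul]
        rw [hvV x hx.1, mul_one, max_eq_right]
        have := hx.2
        simp only [Set.mem_setOf_eq] at this
        linarith
      have hmono := A_mono A hApos hAadd (pc_smul_mem hv hs) hle y
      rw [hAadd f hf q hq] at hmono
      rw [A_rsmul A hApos hAadd _ hs hv] at hmono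
      simp only [ZeroAtInftyContinuousMap.add_apply, ZeroAtInftyContinuousMap.smul_apply,
        smul_eq_mul] at hmono
      rw [hqy] at hmono
      rw [← hcdef] at hmono
      linarith
    apply le_antisymm
    · -- A f y ≤ f x₀ * c
      refine le_of_forall_pos_le_add (fun η hη => ?_)
      rcases eq_or_lt_of_le hc0 with hczero | hcpos
      · have := hup 1 one_pos
        rw [← hczero, mul_zero] at this ⊢
        linarith
      · have := hup (η / c) (by positivity)
        have h7 : (f x₀ + η / c) * c = f x₀ * c + η := by
          field_simp
        linarith
    · -- f x₀ * c ≤ A f y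
      rcases eq_or_lt_of_le (hf x₀) with hf0 | hf0
      · rw [← hf0, zero_mul]
        exact hApos f hf y
      · refine le_of_forall_pos_le_add (fun η hη => ?_)
        set ε := min (f x₀) (η / (c + 1)) with hεdef
        have hεpos : 0 < ε := lt_min hf0 (by positivity)
        have hεf : ε ≤ f x₀ := min_le_left _ _
        have := hdown ε hεpos hεf
        have h8 : ε * c ≤ η := by
          have h9 : ε ≤ η / (c + 1) := min_le_right _ _
          have h10 : ε * c ≤ (η / (c + 1)) * c := mul_le_mul_of_nonneg_right h9 hc0
          have h11 : (η / (c + 1)) * c ≤ η := by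
            rw [div_mul_eq_mul_div, div_le_iff₀ (by linarith)]
            nlinarith
          linarith
        nlinarith [this]
  -- positivity of c
  have hcpos : 0 < c := by
    rcases eq_or_lt_of_le hc0 with hczero | hcpos
    · exfalso
      have := claimB (B u₀) (hBpos u₀ hu₀)
      rw [← hczero, mul_zero] at this
      rw [this] at hp₀
      exact lt_irrefl 0 hp₀
    · exact hcpos
  exact ⟨x₀, c, hcpos, fun f hf => by rw [claimB f hf]; ring⟩

end Pointwise

/-- **Main theorem (necessity).** If `T` is a bijection between the positive cones of
`C₀(X)` and `C₀(Y)` with `‖T(f+g)‖ = ‖Tf + Tg‖` for all `f, g` in the cone, then there is a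
homeomorphism `τ : Y → X` and a continuous function `h : Y → (0, ∞)`, bounded and bounded
away from zero, such that `Tf(y) = h(y) · f(τ(y))`. -/
theorem stmt0 {X Y : Type*} [TopologicalSpace X] [T2Space X] [LocallyCompactSpace X]
    [TopologicalSpace Y] [T2Space Y] [LocallyCompactSpace Y]
    (T : C₀(X, ℝ) → C₀(Y, ℝ))
    (hbij : Set.BijOn T (posCone X) (posCone Y))
    (hnorm : ∀ f ∈ posCone X, ∀ g ∈ posCone X, ‖T (f + g)‖ = ‖T f + T g‖) :
    ∃ (τ : Y ≃ₜ X) (h : Y → ℝ), Continuous h ∧ (∀ y, 0 < h y) ∧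
      (∃ M : ℝ, ∀ y, h y ≤ M) ∧ (∃ c : ℝ, 0 < c ∧ ∀ y, c ≤ h y) ∧
      ∀ f ∈ posCone X, ∀ y : Y, T f y = h y * f (τ y) := by
  -- T 0 = 0
  have hT0 : T 0 = 0 := by
    have h1 := hnorm 0 pc_zero_mem 0 pc_zero_mem
    rw [add_zero] at h1
    have h2 : T 0 + T 0 = (2 : ℝ) • T 0 := by
      apply ZeroAtInftyContinuousMap.ext
      intro y
      simp only [ZeroAtInftyContinuousMap.add_apply, ZeroAtInftyContinuousMap.smul_apply,
        smul_eq_mul]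
      ring
    rw [h2, pc_norm_smul] at h1
    have h3 : ‖T 0‖ = 0 := by
      have : |(2:ℝ)| = 2 := by norm_num
      rw [this] at h1
      linarith
    exact norm_eq_zero.mp h3
  rcases isEmpty_or_nonempty X with hX | hX
  · rcases isEmpty_or_nonempty Y with hY | hY
    · -- both empty
      refine ⟨⟨Equiv.equivOfIsEmpty Y X,
        continuous_iff_continuousAt.mpr (fun a => isEmptyElim a),
        continuous_iff_continuousAt.mpr (fun a => isEmptyElim a)⟩,
        fun _ => 1, continuous_const, fun y => one_pos, ⟨1, fun y => le_refl 1⟩,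
        ⟨1, one_pos, fun y => le_refl 1⟩, fun f _ y => isEmptyElim y⟩
    · -- X empty, Y nonempty : contradiction
      exfalso
      obtain ⟨y⟩ := hY
      obtain ⟨u, hu, _, _, _, huy⟩ := pc_bump_one (isOpen_univ (X := Y)) (Set.mem_univ y)
      obtain ⟨f, hf, hTf⟩ := hbij.surjOn hu
      have hf0 : f = 0 := ZeroAtInftyContinuousMap.eq_of_empty f 0
      rw [hf0, hT0] at hTf
      rw [← hTf] at huy
      simp at huy
  rcases isEmpty_or_nonempty Y with hY | hY
  · -- X nonempty, Y empty : contradiction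
    exfalso
    obtain ⟨x⟩ := hX
    obtain ⟨b, hb, _, _, _, hbx⟩ := pc_bump_one (isOpen_univ (X := X)) (Set.mem_univ x)
    have hTb : T b = T 0 := ZeroAtInftyContinuousMap.eq_of_empty _ _
    have := hbij.injOn hb pc_zero_mem hTb
    rw [this] at hbx
    simp at hbx
  -- main case
  classical
  set S : C₀(Y, ℝ) → C₀(X, ℝ) := fun u =>
    if h : u ∈ posCone Y then
      ((Set.mem_image _ _ _).mp (hbij.surjOn h)).choose
    else 0 with hSdef
  have hS : ∀ u ∈ posCone Y, S u ∈ posCone X ∧ T (S u) = u := by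
    intro u hu
    rw [hSdef]
    simp only [dif_pos hu]
    obtain ⟨h1, h2⟩ := ((Set.mem_image _ _ _).mp (hbij.surjOn hu)).choose_spec
    exact ⟨h1, h2⟩
  have hSpos : ∀ u ∈ posCone Y, S u ∈ posCone X := fun u hu => (hS u hu).1
  have hTS : ∀ u ∈ posCone Y, T (S u) = u := fun u hu => (hS u hu).2
  have hST : ∀ f ∈ posCone X, S (T f) = f := by
    intro f hf
    have hTf : T f ∈ posCone Y := hbij.mapsTo hf
    exact hbij.injOn (hSpos _ hTf) hf (hTS _ hTf)
  have gp : GoodPair T S :=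
    ⟨fun f hf => hbij.mapsTo hf, hSpos, hTS, hnorm⟩
  have hTadd : ∀ f ∈ posCone X, ∀ g ∈ posCone X, T (f + g) = T f + T g :=
    fun f hf g hg => gp.T_add hST hf hg
  have hSadd : ∀ u ∈ posCone Y, ∀ v ∈ posCone Y, S (u + v) = S u + S v := by
    intro u hu v hv
    apply hbij.injOn (hSpos _ (pc_add_mem hu hv)) (pc_add_mem (hSpos u hu) (hSpos v hv))
    rw [hTS _ (pc_add_mem hu hv), hTadd _ (hSpos u hu) _ (hSpos v hv), hTS u hu, hTS v hv]
  have hTpos : ∀ f ∈ posCone X, T f ∈ posCone Y := fun f hf => hbij.mapsTo hf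
  -- pointwise representations
  have repT := A_pointwise T S hTpos hSpos hTS hST hTadd hSadd
  have repS := A_pointwise S T hSpos hTpos hST hTS hSadd hTadd
  choose τ₀ c hcpos hrep using repT
  choose σ₀ k hkpos hrepS using repS
  -- bounds
  obtain ⟨CT, hCT, hCTb⟩ := A_bounded T hTpos hTadd
  obtain ⟨CS, hCS, hCSb⟩ := A_bounded S hSpos hSadd
  have hub : ∀ y, c y ≤ CT := by
    intro y
    obtain ⟨v, hv, hv1, _, _, hvx⟩ := pc_bump_one (isOpen_univ (X := X)) (Set.mem_univ (τ₀ y))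
    have h1 : T v y = c y * v (τ₀ y) := hrep y v hv
    rw [hvx, mul_one] at h1
    have h2 : T v y ≤ ‖T v‖ := pc_le_norm (hTpos v hv) y
    have h3 : ‖T v‖ ≤ CT * ‖v‖ := hCTb v hv
    have h4 : ‖v‖ ≤ 1 := pc_norm_le' hv zero_le_one hv1
    nlinarith
  have hlb : ∀ y, 1 / CS ≤ c y := by
    intro y
    obtain ⟨u, hu, hu1, _, _, huy⟩ := pc_bump_one (isOpen_univ (X := Y)) (Set.mem_univ y)
    have h1 : T (S u) = u := hTS u hu
    have h2 := hrep y (S u) (hSpos u hu)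
    rw [h1, huy] at h2
    have h3 : (S u) (τ₀ y) ≤ ‖S u‖ := pc_le_norm (hSpos u hu) (τ₀ y)
    have h4 : ‖S u‖ ≤ CS * ‖u‖ := hCSb u hu
    have h5 : ‖u‖ ≤ 1 := pc_norm_le' hu zero_le_one hu1
    rw [div_le_iff₀ hCS]
    calc 1 = c y * (S u) (τ₀ y) := h2
      _ ≤ c y * ‖S u‖ := mul_le_mul_of_nonneg_left h3 (hcpos y).le
      _ ≤ c y * (CS * ‖u‖) := mul_le_mul_of_nonneg_left h4 (hcpos y).le
      _ ≤ c y * (CS * 1) := mul_le_mul_of_nonneg_left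
          (mul_le_mul_of_nonneg_left h5 hCS.le) (hcpos y).le
      _ = c y * CS := by ring
  -- inverses
  have hright : ∀ x, τ₀ (σ₀ x) = x := by
    intro x
    by_contra hne
    have hW : IsOpen ({τ₀ (σ₀ x)}ᶜ : Set X) := isOpen_compl_singleton
    have hxW : x ∈ ({τ₀ (σ₀ x)}ᶜ : Set X) := by
      simp only [Set.mem_compl_iff, Set.mem_singleton_iff]
      exact fun h => hne h.symm
    obtain ⟨f, hf, hf1, hfsupp, _, hfx⟩ := pc_bump_one hW hxW
    have hfx' : f (τ₀ (σ₀ x)) = 0 := by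
      apply image_eq_zero_of_notMem_tsupport
      intro hmem
      exact (hfsupp hmem) rfl
    have h1 := hrepS x (T f) (hTpos f hf)
    rw [hST f hf] at h1
    rw [hrep (σ₀ x) f hf, hfx', mul_zero, mul_zero] at h1
    rw [hfx] at h1
    exact one_ne_zero h1
  have hleft : ∀ y, σ₀ (τ₀ y) = y := by
    intro y
    by_contra hne
    have hW : IsOpen ({σ₀ (τ₀ y)}ᶜ : Set Y) := isOpen_compl_singleton
    have hyW : y ∈ ({σ₀ (τ₀ y)}ᶜ : Set Y) := by
      simp only [Set.mem_compl_iff, Set.mem_singleton_iff]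
      exact fun h => hne h.symm
    obtain ⟨u, hu, hu1, husupp, _, huy⟩ := pc_bump_one hW hyW
    have huy' : u (σ₀ (τ₀ y)) = 0 := by
      apply image_eq_zero_of_notMem_tsupport
      intro hmem
      exact (husupp hmem) rfl
    have h1 := hrep y (S u) (hSpos u hu)
    rw [hTS u hu] at h1
    rw [hrepS (τ₀ y) u hu, huy', mul_zero, mul_zero] at h1
    rw [huy] at h1
    exact one_ne_zero h1
  -- continuity of τ₀
  have hτcont : Continuous τ₀ := by
    rw [continuous_iff_continuousAt]
    intro y₀
    rw [continuousAt_def]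
    intro AA hAA
    obtain ⟨W, hWA, hWopen, hWmem⟩ := mem_nhds_iff.mp hAA
    obtain ⟨v, hv, hv1, hvsupp, _, hvx⟩ := pc_bump_one hWopen hWmem
    have hUopen : IsOpen {y | 0 < T v y} := isOpen_lt continuous_const (T v).continuous
    have hy₀U : y₀ ∈ {y | 0 < T v y} := by
      simp only [Set.mem_setOf_eq]
      rw [hrep y₀ v hv, hvx, mul_one]
      exact hcpos y₀
    have hUsub : {y | 0 < T v y} ⊆ τ₀ ⁻¹' AA := by
      intro y hy
      simp only [Set.mem_setOf_eq] at hy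
      rw [hrep y v hv] at hy
      have hvy : v (τ₀ y) ≠ 0 := by
        intro h0
        rw [h0, mul_zero] at hy
        exact lt_irrefl 0 hy
      have : τ₀ y ∈ tsupport ⇑v := subset_closure hvy
      exact Set.mem_preimage.mpr (hWA (hvsupp this))
    exact mem_nhds_iff.mpr ⟨{y | 0 < T v y}, hUsub, hUopen, hy₀U⟩
  have hσcont : Continuous σ₀ := by
    rw [continuous_iff_continuousAt]
    intro x₀
    rw [continuousAt_def]
    intro AA hAA
    obtain ⟨W, hWA, hWopen, hWmem⟩ := mem_nhds_iff.mp hAA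
    obtain ⟨u, hu, hu1, husupp, _, hux⟩ := pc_bump_one hWopen hWmem
    have hUopen : IsOpen {x | 0 < S u x} := isOpen_lt continuous_const (S u).continuous
    have hx₀U : x₀ ∈ {x | 0 < S u x} := by
      simp only [Set.mem_setOf_eq]
      rw [hrepS x₀ u hu, hux, mul_one]
      exact hkpos x₀
    have hUsub : {x | 0 < S u x} ⊆ σ₀ ⁻¹' AA := by
      intro x hx
      simp only [Set.mem_setOf_eq] at hx
      rw [hrepS x u hu] at hx
      have huyy : u (σ₀ x) ≠ 0 := by
        intro h0
        rw [h0, mul_zero] at hx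
        exact lt_irrefl 0 hx
      have : σ₀ x ∈ tsupport ⇑u := subset_closure huyy
      exact Set.mem_preimage.mpr (hWA (husupp this))
    exact mem_nhds_iff.mpr ⟨{x | 0 < S u x}, hUsub, hUopen, hx₀U⟩
  -- continuity of c
  have hccont : Continuous c := by
    rw [continuous_iff_continuousAt]
    intro y₀
    obtain ⟨v, hv, hv1, _, _, V, hVopen, hVmem, hvV⟩ :=
      pc_bump (isOpen_univ (X := X)) (Set.mem_univ (τ₀ y₀))
    have hUopen : IsOpen (τ₀ ⁻¹' V) := hVopen.preimage hτcont
    have hy₀U : y₀ ∈ τ₀ ⁻¹' V := Set.mem_preimage.mpr hVmem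
    have heq : ∀ y ∈ τ₀ ⁻¹' V, c y = T v y := by
      intro y hy
      rw [hrep y v hv, hvV _ (Set.mem_preimage.mp hy), mul_one]
    have hev : c =ᶠ[𝓝 y₀] (fun y => T v y) :=
      Filter.eventuallyEq_of_mem (hUopen.mem_nhds hy₀U) (fun y hy => heq y hy)
    exact ((T v).continuous.continuousAt).congr hev.symm
  -- assemble
  refine ⟨⟨⟨τ₀, σ₀, hleft, hright⟩, hτcont, hσcont⟩, c, hccont, hcpos,
    ⟨CT, hub⟩, ⟨1 / CS, by positivity, hlb⟩, ?_⟩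
  intro f hf y
  exact hrep y f hf
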